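/- Fix integers K ≥ 1 and N ≥ 1. For k,l ∈ {1,…,K} and n ∈ {1,…,N} let channel power gains g_{kln} > 0, noise powers σ_{kn}² > 0, rate weights w_k > 0, an SINR gap Γ ≥ 1, sum-power budgets P_k^tot > 0, and spectral masks P_{kn}^mask > 0 be given. Let f* = max_{P ∈ 𝒫} g(P) and, for ξ > 0, let f*(ξ) = sup { g(P) : P ∈ 𝒫, P_{kn} ≥ ξ for all k,n }. Suppose 0 < ξ ≤ P_k^tot/(2N(N+1)) for every k and ξ ≤ P_{kn}^mask for every k,n. Then f* ≥ f*(ξ) ≥ f* − 2ξ·N·K²·max_{k,l,n} ( w_l·g_{lkn}/σ_{ln}² ). -/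

import Mathlib

lemma log_key (X Y0 Z c b : ℝ) (hX : 0 < X) (hY : 0 ≤ Y0) (hZ : 0 ≤ Z)
    (hc0 : 0 ≤ c) (hc1 : c ≤ 1) (hb : (1 - c) * Y0 / (X + Z) ≤ b) :
    Real.log (1 + Y0 / X) - Real.log (1 + b) ≤ c * Y0 / X + Z / X := by
  have hXZ : 0 < X + Z := by linarith
  set b0 := (1 - c) * Y0 / (X + Z) with hb0def
  have hb0 : 0 ≤ b0 := div_nonneg (mul_nonneg (by linarith) hY) hXZ.le
  have h1 : Real.log (1 + b0) ≤ Real.log (1 + b) :=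
    Real.log_le_log (by linarith) (by linarith)
  have hA : 0 ≤ c * Y0 / X := div_nonneg (mul_nonneg hc0 hY) hX.le
  have hB : 0 ≤ Z / X := div_nonneg hZ hX.le
  have hkey : 1 + Y0 / X ≤ (1 + c * Y0 / X) * ((1 + Z / X) * (1 + b0)) := by
    rw [hb0def]
    have hX' := hX.ne'
    have hXZ' := hXZ.ne'
    rw [show (1:ℝ) + Y0 / X = (X + Y0)/X by field_simp,
        show (1:ℝ) + c * Y0 / X = (X + c*Y0)/X by field_simp,
        show (1:ℝ) + Z / X = (X + Z)/X by field_simp,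
        show (1:ℝ) + (1 - c) * Y0 / (X + Z) = (X + Z + (1-c)*Y0)/(X+Z) by field_simp,
        div_mul_div_comm, div_mul_div_comm, div_le_div_iff₀ hX (by positivity)]
    have base : (X + Y0) * X ≤ (X + c * Y0) * (X + Z + (1 - c) * Y0) := by
      nlinarith [mul_nonneg (mul_nonneg hc0 hY) hZ,
        mul_nonneg (mul_nonneg hc0 (mul_nonneg (by linarith : (0:ℝ) ≤ 1 - c) hY)) hY]
    nlinarith [mul_le_mul_of_nonneg_right base (mul_nonneg hX.le hXZ.le)]
  have h2 : Real.log (1 + Y0 / X) ≤ Real.log (1 + c * Y0 / X) + (Real.log (1 + Z / X) + Real.log (1 + b0)) := by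
    calc Real.log (1 + Y0 / X) ≤ Real.log ((1 + c * Y0 / X) * ((1 + Z / X) * (1 + b0))) :=
          Real.log_le_log (by positivity) hkey
      _ = _ := by
          rw [Real.log_mul (by positivity) (by positivity),
            Real.log_mul (by positivity) (by positivity)]
  have h3 : Real.log (1 + c * Y0 / X) ≤ c * Y0 / X := by
    have := Real.log_le_sub_one_of_pos (show (0:ℝ) < 1 + c * Y0 / X by positivity)
    linarith
  have h4 : Real.log (1 + Z / X) ≤ Z / X := by
    have := Real.log_le_sub_one_of_pos (show (0:ℝ) < 1 + Z / X by positivity)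
    linarith
  linarith

/-- Interference-plus-noise power `I_{kn}(P) = σ_{kn}² + Σ_{l≠k} g_{kln} P_{ln}`. -/
noncomputable def interf (K N : ℕ) (g : Fin K → Fin K → Fin N → ℝ)
    (σ2 : Fin K → Fin N → ℝ) (P : Fin K → Fin N → ℝ) (k : Fin K) (n : Fin N) : ℝ :=
  σ2 k n + ∑ l ∈ Finset.univ.erase k, g k l n * P l n

/-- SINR `SINR_{kn}(P) = g_{kkn} P_{kn} / I_{kn}(P)`. -/
noncomputable def sinr (K N : ℕ) (g : Fin K → Fin K → Fin N → ℝ)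
    (σ2 : Fin K → Fin N → ℝ) (P : Fin K → Fin N → ℝ) (k : Fin K) (n : Fin N) : ℝ :=
  g k k n * P k n / interf K N g σ2 P k n

/-- Weighted sum rate `g(P) = Σ_k Σ_n w_k log(1 + SINR_{kn}(P)/Γ)`. -/
noncomputable def wsr (K N : ℕ) (g : Fin K → Fin K → Fin N → ℝ)
    (σ2 : Fin K → Fin N → ℝ) (w : Fin K → ℝ) (Γ : ℝ)
    (P : Fin K → Fin N → ℝ) : ℝ :=
  ∑ k, ∑ n, w k * Real.log (1 + sinr K N g σ2 P k n / Γ)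

/-- Theorem 2: with `f*` the maximum weighted sum rate over the
feasible set `𝒫`, and `f*(ξ)` the supremum after adding the entrywise lower-bound
constraints `P_{kn} ≥ ξ`, if `0 < ξ ≤ P_k^tot/(2N(N+1))` for every `k` and
`ξ ≤ P_{kn}^mask` for all `k,n`, then
`f* ≥ f*(ξ) ≥ f* − 2ξNK²·max_{k,l,n}(w_l g_{lkn}/σ_{ln}²)`. -/
theorem gp_lower_bound_loss (K N : ℕ) (hK : 1 ≤ K) (hN : 1 ≤ N)
    (g : Fin K → Fin K → Fin N → ℝ) (hg : ∀ k l n, 0 < g k l n)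
    (σ2 : Fin K → Fin N → ℝ) (hσ : ∀ k n, 0 < σ2 k n)
    (w : Fin K → ℝ) (hw : ∀ k, 0 < w k) (Γ : ℝ) (hΓ : 1 ≤ Γ)
    (Ptot : Fin K → ℝ) (hPtot : ∀ k, 0 < Ptot k)
    (Pmask : Fin K → Fin N → ℝ) (hPmask : ∀ k n, 0 < Pmask k n)
    (feas : Set (Fin K → Fin N → ℝ))
    (hfeas : feas =
      {P | (∀ k n, 0 ≤ P k n ∧ P k n ≤ Pmask k n) ∧ ∀ k, ∑ n, P k n ≤ Ptot k})
    (fstar : ℝ) (hfstar : IsGreatest (wsr K N g σ2 w Γ '' feas) fstar)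
    (M : ℝ)
    (hM : IsGreatest {x : ℝ | ∃ k l : Fin K, ∃ n : Fin N, x = w l * g l k n / σ2 l n} M)
    (ξ : ℝ) (hξ : 0 < ξ)
    (hξtot : ∀ k, ξ ≤ Ptot k / (2 * N * (N + 1)))
    (hξmask : ∀ k n, ξ ≤ Pmask k n) :
    fstar ≥ sSup (wsr K N g σ2 w Γ '' {P ∈ feas | ∀ k n, ξ ≤ P k n}) ∧
      sSup (wsr K N g σ2 w Γ '' {P ∈ feas | ∀ k n, ξ ≤ P k n}) ≥
        fstar - 2 * ξ * N * K ^ 2 * M := by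
  have hN1 : (1:ℝ) ≤ (N:ℝ) := by exact_mod_cast hN
  have hK1 : (1:ℝ) ≤ (K:ℝ) := by exact_mod_cast hK
  -- the optimizer
  obtain ⟨P, hPfeas, hPwsr⟩ := hfstar.1
  have hPfeas' := hPfeas
  rw [hfeas] at hPfeas'
  obtain ⟨hPb, hPsum⟩ := hPfeas'
  have hP0 : ∀ k n, 0 ≤ P k n := fun k n => (hPb k n).1
  -- M positive
  have hM0 : 0 < M := by
    obtain ⟨k, l, n, hx⟩ := hM.1
    rw [hx]
    have := hw l
    have := hg l k n
    have := hσ l n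
    positivity
  -- scaling factors
  set c : Fin K → ℝ := fun k => N * ξ / Ptot k with hcdef
  have hc0 : ∀ k, 0 ≤ c k := by
    intro k
    simp only [hcdef]
    have := hPtot k
    positivity
  have hc1 : ∀ k, c k ≤ 1 := by
    intro k
    have h := hξtot k
    rw [le_div_iff₀ (by nlinarith : (0:ℝ) < 2 * N * (N + 1))] at h
    rw [hcdef]
    simp only
    rw [div_le_one (hPtot k)]
    have hNξ : 0 ≤ (N:ℝ) * ξ * (2 * N + 1) :=
      mul_nonneg (by positivity) (by linarith)
    nlinarith
  have hcP : ∀ k, c k * Ptot k = N * ξ := fun k => div_mul_cancel₀ _ (hPtot k).ne'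
  -- the perturbed point
  set Q : Fin K → Fin N → ℝ := fun k n => max ξ ((1 - c k) * P k n) with hQdef
  have hQlb : ∀ k n, ξ ≤ Q k n := fun k n => le_max_left _ _
  have hQ0 : ∀ k n, 0 ≤ Q k n := fun k n => hξ.le.trans (hQlb k n)
  have hQmask : ∀ k n, Q k n ≤ Pmask k n := by
    intro k n
    refine max_le (hξmask k n) (le_trans ?_ (hPb k n).2)
    nlinarith [hc0 k, hP0 k n]
  have hQle : ∀ k n, Q k n ≤ (1 - c k) * P k n + ξ := by
    intro k n
    refine max_le ?_ (by linarith)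
    nlinarith [hc0 k, hc1 k, hP0 k n]
  have hQge : ∀ k n, (1 - c k) * P k n ≤ Q k n := fun k n => le_max_right _ _
  have hQsum : ∀ k, ∑ n, Q k n ≤ Ptot k := by
    intro k
    calc ∑ n, Q k n ≤ ∑ n, ((1 - c k) * P k n + ξ) :=
          Finset.sum_le_sum fun n _ => hQle k n
      _ = (1 - c k) * ∑ n, P k n + N * ξ := by
          rw [Finset.sum_add_distrib, ← Finset.mul_sum, Finset.sum_const,
            Finset.card_univ, Fintype.card_fin, nsmul_eq_mul]
      _ ≤ (1 - c k) * Ptot k + N * ξ := by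
          have := hc1 k
          have := hPsum k
          nlinarith
      _ = Ptot k := by linear_combination -(hcP k)
  have hQfeas : Q ∈ feas := by
    rw [hfeas]; exact ⟨fun k n => ⟨hQ0 k n, hQmask k n⟩, hQsum⟩
  -- interference facts
  set S : Fin K → Fin N → ℝ := fun k n => ∑ l ∈ Finset.univ.erase k, g k l n with hSdef
  have hS0 : ∀ k n, 0 ≤ S k n := fun k n =>
    Finset.sum_nonneg fun l _ => (hg k l n).le
  have hIpos : ∀ (R : Fin K → Fin N → ℝ), (∀ k n, 0 ≤ R k n) → ∀ k n,
      0 < interf K N g σ2 R k n := by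
    intro R hR k n
    have : 0 ≤ ∑ l ∈ Finset.univ.erase k, g k l n * R l n :=
      Finset.sum_nonneg fun l _ => mul_nonneg (hg k l n).le (hR l n)
    have := hσ k n
    unfold interf; linarith
  have hIQ : ∀ k n, interf K N g σ2 Q k n ≤ interf K N g σ2 P k n + ξ * S k n := by
    intro k n
    have hsum : ∑ l ∈ Finset.univ.erase k, g k l n * Q l n ≤
        ∑ l ∈ Finset.univ.erase k, (g k l n * P l n + ξ * g k l n) := by
      refine Finset.sum_le_sum fun l _ => ?_
      have h1 : Q l n ≤ P l n + ξ := by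
        have := hQle l n
        nlinarith [hc0 l, hP0 l n]
      nlinarith [hg k l n, hQ0 l n]
    rw [Finset.sum_add_distrib, ← Finset.mul_sum] at hsum
    unfold interf
    rw [hSdef]
    simp only
    linarith
  -- per-term bound
  have hterm : ∀ k n,
      w k * Real.log (1 + sinr K N g σ2 P k n / Γ)
        - w k * Real.log (1 + sinr K N g σ2 Q k n / Γ) ≤
      c k * (M * P k n) + ξ * (w k * S k n / σ2 k n) := by
    intro k n
    have hΓ0 : 0 < Γ := by linarith
    have hIP := hIpos P hP0 k n
    have hIQ' := hIpos Q hQ0 k n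
    have hIσ : σ2 k n ≤ interf K N g σ2 P k n := by
      have : 0 ≤ ∑ l ∈ Finset.univ.erase k, g k l n * P l n :=
        Finset.sum_nonneg fun l _ => mul_nonneg (hg k l n).le (hP0 l n)
      unfold interf; linarith
    set X := Γ * interf K N g σ2 P k n with hXdef
    set Y0 := g k k n * P k n with hY0def
    set Z := Γ * (ξ * S k n) with hZdef
    have hX : 0 < X := mul_pos hΓ0 hIP
    have hY : 0 ≤ Y0 := mul_nonneg (hg k k n).le (hP0 k n)
    have hZ0 : 0 ≤ Z := mul_nonneg hΓ0.le (mul_nonneg hξ.le (hS0 k n))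
    have hPform : sinr K N g σ2 P k n / Γ = Y0 / X := by
      rw [sinr, hXdef, hY0def, div_div]; ring
    have hQform : sinr K N g σ2 Q k n / Γ = g k k n * Q k n / (Γ * interf K N g σ2 Q k n) := by
      rw [sinr, div_div]; ring
    have hb : (1 - c k) * Y0 / (X + Z) ≤ sinr K N g σ2 Q k n / Γ := by
      rw [hQform]
      have hXZ : X + Z = Γ * (interf K N g σ2 P k n + ξ * S k n) := by
        rw [hXdef, hZdef]; ring
      rw [hXZ]
      apply div_le_div₀ (mul_nonneg (hg k k n).le (hQ0 k n))
      · rw [hY0def]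
        have := hQge k n
        nlinarith [hg k k n]
      · exact mul_pos hΓ0 hIQ'
      · exact mul_le_mul_of_nonneg_left (hIQ k n) hΓ0.le
    have hkey := log_key X Y0 Z (c k) (sinr K N g σ2 Q k n / Γ) hX hY hZ0
      (hc0 k) (hc1 k) hb
    rw [← hPform] at hkey
    -- bound the RHS of hkey
    have hXσ : σ2 k n ≤ X := by
      have : 1 * σ2 k n ≤ Γ * interf K N g σ2 P k n :=
        mul_le_mul hΓ hIσ (hσ k n).le hΓ0.le
      rw [hXdef]; linarith
    have hb1 : c k * Y0 / X ≤ c k * Y0 / σ2 k n :=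
      div_le_div_of_nonneg_left (mul_nonneg (hc0 k) hY) (hσ k n) hXσ
    have hb2 : Z / X ≤ ξ * S k n / σ2 k n := by
      have hXg : Γ * σ2 k n ≤ X := by
        rw [hXdef]; exact mul_le_mul_of_nonneg_left hIσ hΓ0.le
      calc Z / X ≤ Z / (Γ * σ2 k n) :=
            div_le_div_of_nonneg_left hZ0 (mul_pos hΓ0 (hσ k n)) hXg
        _ = ξ * S k n / σ2 k n := by
            rw [hZdef, mul_div_mul_left _ _ hΓ0.ne']
    have hMk : w k * g k k n / σ2 k n ≤ M := hM.2 ⟨k, k, n, rfl⟩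
    have hlog : Real.log (1 + sinr K N g σ2 P k n / Γ)
        - Real.log (1 + sinr K N g σ2 Q k n / Γ) ≤
        c k * Y0 / σ2 k n + ξ * S k n / σ2 k n := by linarith
    have hwk := (hw k).le
    have := mul_le_mul_of_nonneg_left hlog hwk
    rw [mul_sub] at this
    refine le_trans this ?_
    rw [mul_add]
    have t1 : w k * (c k * Y0 / σ2 k n) ≤ c k * (M * P k n) := by
      have h1 : w k * g k k n / σ2 k n * P k n ≤ M * P k n :=
        mul_le_mul_of_nonneg_right hMk (hP0 k n)
      have h2 : w k * (c k * Y0 / σ2 k n) = c k * (w k * g k k n / σ2 k n * P k n) := by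
        rw [hY0def]; field_simp
      rw [h2]
      exact mul_le_mul_of_nonneg_left h1 (hc0 k)
    have t2 : w k * (ξ * S k n / σ2 k n) = ξ * (w k * S k n / σ2 k n) := by
      field_simp
    rw [t2]
    linarith
  -- total loss bound
  have hsumconstN : ∀ (a : ℝ), (∑ _n : Fin N, a) = N * a := by
    intro a
    rw [Finset.sum_const, Finset.card_univ, Fintype.card_fin, nsmul_eq_mul]
  have hsumconstK : ∀ (a : ℝ), (∑ _l : Fin K, a) = K * a := by
    intro a
    rw [Finset.sum_const, Finset.card_univ, Fintype.card_fin, nsmul_eq_mul]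
  have hrow : ∀ k, ∑ n, (c k * (M * P k n) + ξ * (w k * S k n / σ2 k n)) ≤
      ξ * N * M + ξ * (N * (K * M)) := by
    intro k
    rw [Finset.sum_add_distrib]
    have h1 : ∑ n, c k * (M * P k n) ≤ ξ * N * M := by
      rw [← Finset.mul_sum, ← Finset.mul_sum]
      calc c k * (M * ∑ n, P k n) ≤ c k * (M * Ptot k) := by
            exact mul_le_mul_of_nonneg_left
              (mul_le_mul_of_nonneg_left (hPsum k) hM0.le) (hc0 k)
        _ = ξ * N * M := by linear_combination M * hcP k
    have h2 : ∑ n, ξ * (w k * S k n / σ2 k n) ≤ ξ * (N * (K * M)) := by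
      rw [← Finset.mul_sum]
      refine mul_le_mul_of_nonneg_left ?_ hξ.le
      have hterm2 : ∀ n, w k * S k n / σ2 k n ≤ K * M := by
        intro n
        have hexp : w k * S k n / σ2 k n =
            ∑ l ∈ Finset.univ.erase k, w k * g k l n / σ2 k n := by
          rw [hSdef]
          simp only
          rw [Finset.mul_sum, Finset.sum_div]
        rw [hexp]
        calc ∑ l ∈ Finset.univ.erase k, w k * g k l n / σ2 k n
            ≤ ∑ _l ∈ Finset.univ.erase k, M :=
              Finset.sum_le_sum fun l _ => hM.2 ⟨l, k, n, rfl⟩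
          _ ≤ ∑ _l : Fin K, M :=
              Finset.sum_le_sum_of_subset_of_nonneg (Finset.erase_subset _ _)
                (fun _ _ _ => hM0.le)
          _ = K * M := hsumconstK M
      calc ∑ n, w k * S k n / σ2 k n ≤ ∑ _n : Fin N, ((K : ℝ) * M) :=
            Finset.sum_le_sum fun n _ => hterm2 n
        _ = N * (K * M) := hsumconstN _
    linarith
  have hloss : wsr K N g σ2 w Γ P - wsr K N g σ2 w Γ Q ≤ 2 * ξ * N * K ^ 2 * M := by
    have hdiff : wsr K N g σ2 w Γ P - wsr K N g σ2 w Γ Q =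
        ∑ k, ∑ n, (w k * Real.log (1 + sinr K N g σ2 P k n / Γ)
          - w k * Real.log (1 + sinr K N g σ2 Q k n / Γ)) := by
      unfold wsr
      rw [← Finset.sum_sub_distrib]
      exact Finset.sum_congr rfl fun k _ => (Finset.sum_sub_distrib _ _).symm
    rw [hdiff]
    calc ∑ k, ∑ n, (w k * Real.log (1 + sinr K N g σ2 P k n / Γ)
          - w k * Real.log (1 + sinr K N g σ2 Q k n / Γ))
        ≤ ∑ k, ∑ n, (c k * (M * P k n) + ξ * (w k * S k n / σ2 k n)) :=
          Finset.sum_le_sum fun k _ => Finset.sum_le_sum fun n _ => hterm k n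
      _ ≤ ∑ _k : Fin K, (ξ * N * M + ξ * (N * (K * M))) :=
          Finset.sum_le_sum fun k _ => hrow k
      _ = K * (ξ * N * M + ξ * (N * (K * M))) := hsumconstK _
      _ ≤ 2 * ξ * N * K ^ 2 * M := by
          nlinarith [mul_nonneg (mul_nonneg
            (mul_pos (mul_pos hξ hM0) (show (0:ℝ) < N by linarith)).le
            (show (0:ℝ) ≤ (K:ℝ) by linarith)) (show (0:ℝ) ≤ (K:ℝ) - 1 by linarith)]
  -- assembly
  set T := wsr K N g σ2 w Γ '' {P ∈ feas | ∀ k n, ξ ≤ P k n} with hTdef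
  have hQmem : wsr K N g σ2 w Γ Q ∈ T := ⟨Q, ⟨hQfeas, hQlb⟩, rfl⟩
  have hub : ∀ x ∈ T, x ≤ fstar := by
    rintro x ⟨R, hR, rfl⟩
    exact hfstar.2 ⟨R, hR.1, rfl⟩
  constructor
  · exact csSup_le ⟨_, hQmem⟩ hub
  · have h1 : wsr K N g σ2 w Γ Q ≤ sSup T :=
      le_csSup ⟨fstar, fun x hx => hub x hx⟩ hQmem
    have h2 : fstar - 2 * ξ * N * K ^ 2 * M ≤ wsr K N g σ2 w Γ Q := by
      rw [← hPwsr]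
      linarith
    exact le_trans h2 h1
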